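/- Let r ≥ 2 and k ≥ 2 be fixed integers. There exists a constant C = C(k,r) > 0 such that, asymptotically almost surely as n → ∞, the random Kneser hypergraph KG^r_{n,k}(1/2) contains an empty family A = (A₁, …, A_l) of l = ⌈C·(log₂ n)^{1/(r(k−1))}⌉ pairwise disjoint r-element subsets of [n]. -/

import Mathlib

open Filter Finset

set_option linter.unusedSectionVars false
set_option maxHeartbeats 1000000

section Abstract

open scoped Classical

variable {Ω : Type*} [Fintype Ω] [DecidableEq Ω]

lemma card_filter_trace (F t : Finset Ω) (ht : t ⊆ F) :
    (univ.filter fun G : Finset Ω => G ∩ F = t).card = 2 ^ (Fintype.card Ω - F.card) := by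
  have h : (univ.filter fun G : Finset Ω => G ∩ F = t).card = ((univ \ F).powerset).card := by
    apply Finset.card_bij' (fun G _ => G \ F) (fun H _ => H ∪ t)
    · intro G hG
      simp only [mem_filter, mem_powerset] at hG ⊢
      intro x hx
      simp only [Finset.mem_sdiff] at hx ⊢
      exact ⟨mem_univ x, hx.2⟩
    · intro H hH
      simp only [mem_powerset] at hH
      simp only [mem_filter]
      refine ⟨mem_univ _, ?_⟩
      ext x
      simp only [mem_inter, mem_union]
      constructor
      · rintro ⟨hx | hx, hxF⟩
        · exact absurd hxF (by simpa using (mem_sdiff.mp (hH hx)).2)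
        · exact hx
      · intro hx
        exact ⟨Or.inr hx, ht hx⟩
    · intro G hG
      simp only [mem_filter] at hG
      ext x
      simp only [mem_union, Finset.mem_sdiff]
      constructor
      · rintro (⟨hx, _⟩ | hx)
        · exact hx
        · rw [← hG.2] at hx
          exact (mem_inter.mp hx).1
      · intro hx
        by_cases hxF : x ∈ F
        · exact Or.inr (by rw [← hG.2]; exact mem_inter.mpr ⟨hx, hxF⟩)
        · exact Or.inl ⟨hx, hxF⟩
    · intro H hH
      simp only [mem_powerset] at hH
      ext x
      simp only [Finset.mem_sdiff, mem_union]
      constructor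
      · rintro ⟨hx | hx, hxF⟩
        · exact hx
        · exact absurd (ht hx) hxF
      · intro hx
        exact ⟨Or.inl hx, (mem_sdiff.mp (hH hx)).2⟩
  rw [h, card_powerset, card_sdiff_of_subset (subset_univ F), card_univ]

lemma count_trace_nonempties (m : ℕ) (S : ℕ → Finset Ω) (F t : Finset Ω) (ht : t ⊆ F)
    (hSF : ∀ j < m, Disjoint (S j) F)
    (hSS : ∀ j < m, ∀ j' < m, j ≠ j' → Disjoint (S j) (S j')) :
    ((univ.filter fun G : Finset Ω =>
        G ∩ F = t ∧ ∀ j < m, (G ∩ S j).Nonempty).card : ℝ)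
      = (∏ j ∈ Finset.range m, (1 - ((2 : ℝ) ^ (S j).card)⁻¹)) *
          2 ^ (Fintype.card Ω) / 2 ^ F.card := by
  induction m generalizing F t with
  | zero =>
      simp only [Nat.not_lt_zero, false_implies, implies_true, and_true, prod_range_zero, one_mul]
      rw [card_filter_trace F t ht]
      have hF : F.card ≤ Fintype.card Ω := by
        simpa [card_univ] using card_le_card (subset_univ F)
      rw [eq_div_iff (by positivity)]
      push_cast
      rw [← pow_add]
      congr 1
      omega
  | succ m ih =>
      set A : Finset (Finset Ω) := univ.filter fun G : Finset Ω =>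
        G ∩ F = t ∧ ∀ j < m, (G ∩ S j).Nonempty with hA
      have hsplit :
          (A.filter fun G => (G ∩ S m).Nonempty).card
            + (A.filter fun G => ¬ (G ∩ S m).Nonempty).card = A.card :=
        Finset.card_filter_add_card_filter_not _
      have hBeq : (univ.filter fun G : Finset Ω =>
          G ∩ F = t ∧ ∀ j < m + 1, (G ∩ S j).Nonempty)
          = A.filter fun G => (G ∩ S m).Nonempty := by
        rw [hA, Finset.filter_filter]
        apply Finset.filter_congr
        intro G _
        constructor
        · rintro ⟨h1, h2⟩
          exact ⟨⟨h1, fun j hj => h2 j (by omega)⟩, h2 m (by omega)⟩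
        · rintro ⟨⟨h1, h2⟩, h3⟩
          refine ⟨h1, fun j hj => ?_⟩
          rcases Nat.lt_succ_iff_lt_or_eq.mp hj with h | h
          · exact h2 j h
          · rw [h]; exact h3
      have hdtS : Disjoint t (S m) := Disjoint.mono_left ht (hSF m (by omega)).symm
      have hCeq : (A.filter fun G => ¬ (G ∩ S m).Nonempty)
          = univ.filter fun G : Finset Ω =>
              G ∩ (F ∪ S m) = t ∧ ∀ j < m, (G ∩ S j).Nonempty := by
        rw [hA, Finset.filter_filter]
        apply Finset.filter_congr
        intro G _
        simp only [Finset.not_nonempty_iff_eq_empty]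
        constructor
        · rintro ⟨⟨h1, h2⟩, h3⟩
          refine ⟨?_, h2⟩
          rw [Finset.inter_union_distrib_left, h1, h3, Finset.union_empty]
        · rintro ⟨h1, h2⟩
          have hGF : G ∩ F = t := by
            have h3 : G ∩ (F ∪ S m) ∩ F = t ∩ F := by rw [h1]
            rwa [Finset.inter_assoc, Finset.union_inter_cancel_left,
              Finset.inter_eq_left.mpr ht] at h3
          have hGS : G ∩ S m = ∅ := by
            apply Finset.subset_empty.mp
            rw [← (Finset.disjoint_iff_inter_eq_empty).mp hdtS]
            intro x hx
            rcases Finset.mem_inter.mp hx with ⟨hxG, hxS⟩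
            have : x ∈ t := by
              rw [← h1]
              exact Finset.mem_inter.mpr ⟨hxG, Finset.mem_union_right _ hxS⟩
            exact Finset.mem_inter.mpr ⟨this, hxS⟩
          exact ⟨⟨hGF, h2⟩, hGS⟩
      have hAcard : (A.card : ℝ)
          = (∏ j ∈ Finset.range m, (1 - ((2 : ℝ) ^ (S j).card)⁻¹)) *
              2 ^ (Fintype.card Ω) / 2 ^ F.card :=
        ih F t ht (fun j hj => hSF j (by omega))
          (fun j hj j' hj' h => hSS j (by omega) j' (by omega) h)
      have hCcard : ((A.filter fun G => ¬ (G ∩ S m).Nonempty).card : ℝ)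
          = (∏ j ∈ Finset.range m, (1 - ((2 : ℝ) ^ (S j).card)⁻¹)) *
              2 ^ (Fintype.card Ω) / 2 ^ (F.card + (S m).card) := by
        rw [hCeq]
        have := ih (F ∪ S m) t (ht.trans Finset.subset_union_left)
          (fun j hj => Finset.disjoint_union_right.mpr
            ⟨hSF j (by omega), hSS j (by omega) m (by omega) (by omega)⟩)
          (fun j hj j' hj' h => hSS j (by omega) j' (by omega) h)
        rwa [Finset.card_union_of_disjoint ((hSF m (by omega)).symm)] at this
      have hBcard : ((A.filter fun G => (G ∩ S m).Nonempty).card : ℝ)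
          = (A.card : ℝ) - ((A.filter fun G => ¬ (G ∩ S m).Nonempty).card : ℝ) := by
        rw [← hsplit]; push_cast; ring
      rw [hBeq, hBcard, hAcard, hCcard, Finset.prod_range_succ]
      have h2F : (0:ℝ) < 2 ^ F.card := by positivity
      have h2S : (0:ℝ) < 2 ^ (S m).card := by positivity
      rw [pow_add]
      field_simp

lemma card_powerset_filter_nonempty (s : Finset Ω) :
    ((s.powerset).filter Finset.Nonempty).card = 2 ^ s.card - 1 := by
  have h : (s.powerset).filter Finset.Nonempty = s.powerset.erase ∅ := by
    ext u
    simp [Finset.nonempty_iff_ne_empty, and_comm]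
  rw [h, Finset.card_erase_of_mem (Finset.empty_mem_powerset s), Finset.card_powerset]

lemma sum_prod_one_sub (m : ℕ) (q : ℕ → ℝ) :
    ∑ j ∈ Finset.range m, q j * ∏ j' ∈ Finset.range j, (1 - q j')
      = 1 - ∏ j ∈ Finset.range m, (1 - q j) := by
  induction m with
  | zero => simp
  | succ m ih => rw [Finset.sum_range_succ, Finset.prod_range_succ, ih]; ring

lemma card_traces_le (F t : Finset Ω) (j : ℕ) (S : ℕ → Finset Ω) :
    (((F ∪ (Finset.range (j+1)).biUnion S).powerset).filter
        (fun u => u ∩ F = t ∧ u ∩ S j = ∅ ∧ ∀ j' < j, (u ∩ S j').Nonempty)).card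
      ≤ ∏ j' ∈ Finset.range j, (2 ^ (S j').card - 1) := by
  have hle := Finset.card_le_card_of_injOn
    (s := ((F ∪ (Finset.range (j+1)).biUnion S).powerset).filter
        (fun u => u ∩ F = t ∧ u ∩ S j = ∅ ∧ ∀ j' < j, (u ∩ S j').Nonempty))
    (f := fun u => (fun j' : Fin j => u ∩ S j'.1))
    (t := Fintype.piFinset (fun j' : Fin j => ((S j'.1).powerset.filter Finset.Nonempty)))
    ?_ ?_
  · calc _ ≤ _ := hle
      _ = _ := by
        rw [Fintype.card_piFinset]
        rw [← Fin.prod_univ_eq_prod_range (fun j' => 2 ^ (S j').card - 1) j]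
        exact Finset.prod_congr rfl (fun i _ => card_powerset_filter_nonempty _)
  · intro u hu
    simp only [Finset.mem_coe, Finset.mem_filter, Finset.mem_powerset] at hu
    rw [Finset.mem_coe, Fintype.mem_piFinset]
    intro j'
    simp only [Finset.mem_filter, Finset.mem_powerset]
    exact ⟨Finset.inter_subset_right, hu.2.2.2 j'.1 j'.2⟩
  · -- injectivity
    have key : ∀ u ∈ ((F ∪ (Finset.range (j+1)).biUnion S).powerset).filter
        (fun u => u ∩ F = t ∧ u ∩ S j = ∅ ∧ ∀ j' < j, (u ∩ S j').Nonempty),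
        u = t ∪ (Finset.range j).biUnion (fun j' => u ∩ S j') := by
      intro u hu
      simp only [Finset.mem_filter, Finset.mem_powerset] at hu
      obtain ⟨hsub, hF, hSj, hne⟩ := hu
      ext x
      simp only [Finset.mem_union, Finset.mem_biUnion, Finset.mem_range]
      constructor
      · intro hx
        rcases Finset.mem_union.mp (hsub hx) with hxF | hxS
        · exact Or.inl (hF ▸ Finset.mem_inter.mpr ⟨hx, hxF⟩)
        · rcases Finset.mem_biUnion.mp hxS with ⟨j', hj', hxj'⟩
          rcases Nat.lt_succ_iff_lt_or_eq.mp (Finset.mem_range.mp hj') with h | h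
          · exact Or.inr ⟨j', h, Finset.mem_inter.mpr ⟨hx, hxj'⟩⟩
          · subst h
            exact absurd (Finset.mem_inter.mpr ⟨hx, hxj'⟩) (by simp [hSj])
      · rintro (hx | ⟨j', _, hx⟩)
        · exact (hF ▸ Finset.inter_subset_left) hx
        · exact Finset.inter_subset_left hx
    intro u hu u' hu' heq
    rw [key u hu, key u' hu']
    congr 1
    apply Finset.biUnion_congr rfl
    intro j' hj'
    exact congrFun heq ⟨j', Finset.mem_range.mp hj'⟩

/-- `G` admits a successful greedy selection. -/
def goodP (l m : ℕ) (E : ℕ → (ℕ → ℕ) → ℕ → Finset Ω) (G : Finset Ω) : Prop :=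
  ∃ σ : ℕ → ℕ, (∀ i < l, σ i < m) ∧ ∀ i < l, Disjoint (E i σ (σ i)) G

/-- successor of a selection -/
def consf (j : ℕ) (σ : ℕ → ℕ) : ℕ → ℕ := fun t => if t = 0 then j else σ (t - 1)

theorem abstract_bound (l m D : ℕ) (E : ℕ → (ℕ → ℕ) → ℕ → Finset Ω)
    (H1 : ∀ i σ σ' j, (∀ t < i, σ t = σ' t) → E i σ j = E i σ' j)
    (H2 : ∀ σ i j i' j', i < l → i' < l → j < m → j' < m → (i, j) ≠ (i', j') →
      Disjoint (E i σ j) (E i' σ j'))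
    (H3 : ∀ i σ j, i < l → j < m → (E i σ j).card ≤ D)
    (F t : Finset Ω) (ht : t ⊆ F)
    (H4 : ∀ i σ j, i < l → j < m → Disjoint (E i σ j) F) :
    ((univ.filter fun G : Finset Ω => G ∩ F = t ∧ ¬ goodP l m E G).card : ℝ)
      ≤ l * (1 - ((2:ℝ) ^ D)⁻¹) ^ m * 2 ^ (Fintype.card Ω) / 2 ^ F.card := by
  induction l generalizing E F t with
  | zero =>
      have hgood : ∀ G : Finset Ω, goodP 0 m E G := by
        intro G
        exact ⟨fun _ => 0, by omega, by omega⟩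
      have : (univ.filter fun G : Finset Ω => G ∩ F = t ∧ ¬ goodP 0 m E G) = ∅ := by
        apply Finset.filter_eq_empty_iff.mpr
        intro G _
        simp [hgood G]
      rw [this]
      simp
  | succ l ih =>
      set N := Fintype.card Ω
      set Q : ℝ := 1 - ((2:ℝ) ^ D)⁻¹ with hQdef
      have hQ0 : 0 ≤ Q := by
        have h2 : ((2:ℝ) ^ D)⁻¹ ≤ 1 := by
          rw [inv_le_one_iff₀]
          right
          exact one_le_pow₀ (by norm_num)
        rw [hQdef]; linarith
      have hQ1 : Q ≤ 1 := by
        have h2 : (0:ℝ) < ((2:ℝ) ^ D)⁻¹ := by positivity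
        rw [hQdef]; linarith
      set σ₀ : ℕ → ℕ := fun _ => 0 with hσ₀
      set S : ℕ → Finset Ω := fun j => E 0 σ₀ j with hS
      set q : ℕ → ℝ := fun j => ((2:ℝ) ^ (S j).card)⁻¹ with hq
      have hq0 : ∀ j, 0 < q j := fun j => by positivity
      have hq1 : ∀ j, q j ≤ 1 := fun j => by
        rw [hq]
        simp only
        rw [inv_le_one_iff₀]; right; exact one_le_pow₀ (by norm_num)
      have hqQ : ∀ j < m, 1 - q j ≤ Q := by
        intro j hj
        have hcard : (S j).card ≤ D := H3 0 σ₀ j (by omega) hj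
        have : ((2:ℝ) ^ D)⁻¹ ≤ q j := by
          apply inv_anti₀ (by positivity)
          exact pow_le_pow_right₀ (by norm_num) hcard
        simp only [hQdef]
        linarith
      -- the S j are pairwise disjoint and disjoint from F
      have hSS : ∀ j < m, ∀ j' < m, j ≠ j' → Disjoint (S j) (S j') := by
        intro j hj j' hj' hne
        exact H2 σ₀ 0 j 0 j' (by omega) (by omega) hj hj' (by simp [hne])
      have hSF : ∀ j < m, Disjoint (S j) F := by
        intro j hj
        exact H4 0 σ₀ j (by omega) hj
      -- pieces of the decomposition
      set F' : ℕ → Finset Ω := fun j => F ∪ (Finset.range (j+1)).biUnion S with hF'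
      set 𝒰 : ℕ → Finset (Finset Ω) := fun j => ((F' j).powerset).filter
        (fun u => u ∩ F = t ∧ u ∩ S j = ∅ ∧ ∀ j' < j, (u ∩ S j').Nonempty) with h𝒰
      set E' : ℕ → ℕ → (ℕ → ℕ) → ℕ → Finset Ω :=
        fun j i σ j' => E (i+1) (consf j σ) j' with hE'
      set caseA : Finset (Finset Ω) := univ.filter
        (fun G : Finset Ω => G ∩ F = t ∧ ∀ j < m, (G ∩ S j).Nonempty) with hcaseA
      set bad' : ℕ → Finset Ω → Finset (Finset Ω) := fun j u => univ.filter
        (fun G : Finset Ω => G ∩ F' j = u ∧ ¬ goodP l m (E' j) G) with hbad'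
      -- decomposition
      have hsub : (univ.filter fun G : Finset Ω => G ∩ F = t ∧ ¬ goodP (l+1) m E G)
          ⊆ caseA ∪ (Finset.range m).biUnion (fun j => (𝒰 j).biUnion (fun u => bad' j u)) := by
        intro G hG
        simp only [Finset.mem_filter, Finset.mem_univ, true_and] at hG
        obtain ⟨htr, hbad⟩ := hG
        by_cases hall : ∀ j < m, (G ∩ S j).Nonempty
        · refine Finset.mem_union_left _ ?_
          simp only [hcaseA, Finset.mem_filter, Finset.mem_univ, true_and]
          exact ⟨htr, hall⟩
        · push_neg at hall
          obtain ⟨ja, hja, hjae⟩ := hall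
          have hex : ∃ j, j < m ∧ G ∩ S j = ∅ :=
            ⟨ja, hja, hjae⟩
          set j₀ := Nat.find hex with hj₀
          obtain ⟨hj₀m, hj₀e⟩ := Nat.find_spec hex
          have hj₀min : ∀ j' < j₀, (G ∩ S j').Nonempty := by
            intro j' hj'
            have := Nat.find_min hex hj'
            push_neg at this
            exact this (by omega)
          apply Finset.mem_union_right
          apply Finset.mem_biUnion.mpr
          refine ⟨j₀, Finset.mem_range.mpr hj₀m, ?_⟩
          apply Finset.mem_biUnion.mpr
          have hinter : ∀ X : Finset Ω, X ⊆ F' j₀ → (G ∩ F' j₀) ∩ X = G ∩ X := by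
            intro X hX
            rw [Finset.inter_assoc, Finset.inter_eq_right.mpr hX]
          have hSsub : ∀ j', j' ≤ j₀ → S j' ⊆ F' j₀ := by
            intro j' hj'
            exact (Finset.subset_biUnion_of_mem S
              (Finset.mem_range.mpr (by omega))).trans Finset.subset_union_right
          refine ⟨G ∩ F' j₀, ?_, ?_⟩
          · simp only [h𝒰, Finset.mem_filter, Finset.mem_powerset]
            refine ⟨Finset.inter_subset_right, ?_, ?_, ?_⟩
            · rw [hinter F Finset.subset_union_left, htr]
            · rw [hinter (S j₀) (hSsub j₀ le_rfl), hj₀e]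
            · intro j' hj'
              rw [hinter (S j') (hSsub j' (by omega))]
              exact hj₀min j' hj'
          · simp only [hbad', Finset.mem_filter, Finset.mem_univ, true_and]
            intro hgood'
            apply hbad
            obtain ⟨σ', hσm, hσd⟩ := hgood'
            refine ⟨consf j₀ σ', ?_, ?_⟩
            · intro i hi
              cases i with
              | zero => exact hj₀m
              | succ i => exact hσm i (by omega)
            · intro i hi
              cases i with
              | zero =>
                  have h0 : E 0 (consf j₀ σ') (consf j₀ σ' 0) = S j₀ := by
                    rw [show consf j₀ σ' 0 = j₀ from rfl, hS]
                    exact H1 0 _ _ j₀ (by omega)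
                  rw [h0, Finset.disjoint_iff_inter_eq_empty, Finset.inter_comm]
                  exact hj₀e
              | succ i =>
                  have : consf j₀ σ' (i+1) = σ' i := by simp [consf]
                  rw [this]
                  exact hσd i (by omega)
      -- counting
      have hcard1 : ((univ.filter fun G : Finset Ω => G ∩ F = t ∧ ¬ goodP (l+1) m E G).card : ℝ)
          ≤ (caseA.card : ℝ) + ∑ j ∈ Finset.range m, ∑ u ∈ 𝒰 j, ((bad' j u).card : ℝ) := by
        have h1 := Finset.card_le_card hsub
        have h2 : (caseA ∪ (Finset.range m).biUnion
            (fun j => (𝒰 j).biUnion (fun u => bad' j u))).card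
            ≤ caseA.card + ∑ j ∈ Finset.range m, ∑ u ∈ 𝒰 j, (bad' j u).card := by
          refine (Finset.card_union_le _ _).trans ?_
          gcongr
          refine (Finset.card_biUnion_le).trans ?_
          exact Finset.sum_le_sum (fun j _ => Finset.card_biUnion_le)
        exact_mod_cast h1.trans h2
      have hprod_nonneg : ∀ s : Finset ℕ, 0 ≤ ∏ j' ∈ s, (1 - q j') :=
        fun s => Finset.prod_nonneg (fun j' _ => by linarith [hq1 j'])
      have hcaseA_card : (caseA.card : ℝ) ≤ Q ^ m * 2 ^ N / 2 ^ F.card := by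
        rw [hcaseA, count_trace_nonempties m S F t ht hSF hSS]
        have hprod : ∏ j ∈ Finset.range m, (1 - ((2:ℝ) ^ (S j).card)⁻¹) ≤ Q ^ m := by
          have : Q ^ m = ∏ _j ∈ Finset.range m, Q := by
            rw [Finset.prod_const, Finset.card_range]
          rw [this]
          apply Finset.prod_le_prod
          · intro j _
            have := hq1 j
            rw [hq] at this
            simp only at this
            linarith
          · intro j hj
            exact hqQ j (Finset.mem_range.mp hj)
        gcongr
      have hbad'_card : ∀ j < m, ∀ u ∈ 𝒰 j,
          ((bad' j u).card : ℝ) ≤ l * Q ^ m * 2 ^ N / 2 ^ (F' j).card := by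
        intro j hj u hu
        have hu' : u ⊆ F' j := by
          simp only [h𝒰, Finset.mem_filter, Finset.mem_powerset] at hu
          exact hu.1
        rw [hbad']
        refine ih (E' j) ?_ ?_ ?_ (F' j) u hu' ?_
        · intro i σ σ'' j' hagree
          apply H1
          intro t' ht'
          cases t' with
          | zero => rfl
          | succ t' => exact hagree t' (by omega)
        · intro σ i j₁ i' j₂ hi hi' hj₁ hj₂ hne
          refine H2 (consf j σ) (i+1) j₁ (i'+1) j₂ (by omega) (by omega) hj₁ hj₂ ?_
          intro h
          rw [Prod.mk.injEq] at h
          exact hne (by rw [Prod.mk.injEq]; exact ⟨by omega, h.2⟩)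
        · intro i σ j' hi hj'
          exact H3 (i+1) _ j' (by omega) hj'
        · intro i σ j' hi hj'
          rw [hF']
          apply Finset.disjoint_union_right.mpr
          refine ⟨H4 (i+1) _ j' (by omega) hj', ?_⟩
          apply (Finset.disjoint_biUnion_right _ _ _).mpr
          · intro j'' hj''
            have hj''m : j'' < m := by
              have := Finset.mem_range.mp hj''
              omega
            have hrw : S j'' = E 0 (consf j σ) j'' := H1 0 σ₀ (consf j σ) j'' (by omega)
            rw [hrw]
            exact H2 (consf j σ) (i+1) j' 0 j'' (by omega) (by omega) hj' hj''m (by simp)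
      have hUj_card : ∀ j, ((𝒰 j).card : ℝ) ≤ ∏ j' ∈ Finset.range j, ((2:ℝ) ^ (S j').card - 1) := by
        intro j
        have h := card_traces_le F t j S
        calc ((𝒰 j).card : ℝ) ≤ ((∏ j' ∈ Finset.range j, (2 ^ (S j').card - 1) : ℕ) : ℝ) := by
              exact_mod_cast h
          _ = ∏ j' ∈ Finset.range j, ((2:ℝ) ^ (S j').card - 1) := by
              rw [Nat.cast_prod]
              refine Finset.prod_congr rfl (fun j' _ => ?_)
              rw [Nat.cast_sub (Nat.one_le_two_pow)]
              push_cast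
              ring
      have hF'card : ∀ j < m, (F' j).card = F.card + ∑ j' ∈ Finset.range (j+1), (S j').card := by
        intro j hj
        have hd : Disjoint F ((Finset.range (j+1)).biUnion S) := by
          apply (Finset.disjoint_biUnion_right _ _ _).mpr
          intro j'' hj''
          exact (hSF j'' (by have := Finset.mem_range.mp hj''; omega)).symm
        have hpair : ∀ x ∈ Finset.range (j+1), ∀ y ∈ Finset.range (j+1), x ≠ y →
            Disjoint (S x) (S y) := by
          intro x hx y hy hxy
          exact hSS x (by have := Finset.mem_range.mp hx; omega)
            y (by have := Finset.mem_range.mp hy; omega) hxy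
        rw [hF']
        simp only
        rw [Finset.card_union_of_disjoint hd, Finset.card_biUnion hpair]
      have hterm : ∀ j < m, (∑ u ∈ 𝒰 j, ((bad' j u).card : ℝ))
          ≤ (q j * ∏ j' ∈ Finset.range j, (1 - q j')) * (l * Q ^ m * 2 ^ N / 2 ^ F.card) := by
        intro j hj
        have hb : ∀ u ∈ 𝒰 j, ((bad' j u).card : ℝ) ≤ l * Q ^ m * 2 ^ N / 2 ^ (F' j).card :=
          hbad'_card j hj
        calc (∑ u ∈ 𝒰 j, ((bad' j u).card : ℝ))
            ≤ ∑ _u ∈ 𝒰 j, ((l : ℝ) * Q ^ m * 2 ^ N / 2 ^ (F' j).card) :=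
              Finset.sum_le_sum hb
          _ = ((𝒰 j).card : ℝ) * ((l : ℝ) * Q ^ m * 2 ^ N / 2 ^ (F' j).card) := by
              rw [Finset.sum_const, nsmul_eq_mul]
          _ ≤ (∏ j' ∈ Finset.range j, ((2:ℝ) ^ (S j').card - 1)) *
                ((l : ℝ) * Q ^ m * 2 ^ N / 2 ^ (F' j).card) := by
              apply mul_le_mul_of_nonneg_right (hUj_card j) (by positivity)
          _ = (q j * ∏ j' ∈ Finset.range j, (1 - q j')) *
                ((l : ℝ) * Q ^ m * 2 ^ N / 2 ^ F.card) := by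
              have hfact : ∀ j' : ℕ, ((2:ℝ) ^ (S j').card - 1) = (1 - q j') * 2 ^ (S j').card := by
                intro j'
                rw [hq]
                simp only
                field_simp
              rw [hF'card j hj, pow_add, ← Finset.prod_pow_eq_pow_sum, Finset.prod_range_succ,
                Finset.prod_congr rfl (fun j' _ => hfact j'), Finset.prod_mul_distrib]
              have h2F : ((2:ℝ) ^ F.card) ≠ 0 := by positivity
              have h2s : ((2:ℝ) ^ (S j).card) ≠ 0 := by positivity
              have hP2 : (∏ j' ∈ Finset.range j, (2:ℝ) ^ (S j').card) ≠ 0 := by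
                apply ne_of_gt
                exact Finset.prod_pos (fun j' _ => by positivity)
              have hqj : q j = ((2:ℝ) ^ (S j).card)⁻¹ := rfl
              rw [hqj]
              field_simp
      calc ((univ.filter fun G : Finset Ω => G ∩ F = t ∧ ¬ goodP (l+1) m E G).card : ℝ)
          ≤ (caseA.card : ℝ) + ∑ j ∈ Finset.range m, ∑ u ∈ 𝒰 j, ((bad' j u).card : ℝ) := hcard1
        _ ≤ Q ^ m * 2 ^ N / 2 ^ F.card + ∑ j ∈ Finset.range m,
              (q j * ∏ j' ∈ Finset.range j, (1 - q j')) * (l * Q ^ m * 2 ^ N / 2 ^ F.card) := by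
            exact add_le_add hcaseA_card
              (Finset.sum_le_sum (fun j hj => hterm j (Finset.mem_range.mp hj)))
        _ = Q ^ m * 2 ^ N / 2 ^ F.card + (1 - ∏ j ∈ Finset.range m, (1 - q j)) *
              (l * Q ^ m * 2 ^ N / 2 ^ F.card) := by
            rw [← Finset.sum_mul, sum_prod_one_sub]
        _ ≤ Q ^ m * 2 ^ N / 2 ^ F.card + 1 * (l * Q ^ m * 2 ^ N / 2 ^ F.card) := by
            refine add_le_add le_rfl (mul_le_mul_of_nonneg_right ?_ (by positivity))
            linarith [hprod_nonneg (Finset.range m)]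
        _ = (↑(l + 1) : ℝ) * Q ^ m * 2 ^ N / 2 ^ F.card := by
            push_cast
            ring

end Abstract

/-- The edge set of the Kneser hypergraph `KG^r_{n,k}`: edges are `r`-element
collections of pairwise disjoint `k`-element subsets of `[n]`. -/
def kneserHyperEdges (n k r : ℕ) : Set (Finset {A : Finset (Fin n) // A.card = k}) :=
  {e | e.card = r ∧ ∀ A ∈ e, ∀ B ∈ e, A ≠ B → Disjoint A.1 B.1}

/-- The family `A = (A₁, …, A_l)` of pairwise disjoint `r`-sets is *empty* in the
sub-hypergraph with edge set `G`: for each `i`, no edge of `G` consists entirely of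
`k`-sets lying inside `A₁ ∪ … ∪ A_i` and meeting `A_i`. -/
def emptyFamilyIn {n k : ℕ} (G : Set (Finset {A : Finset (Fin n) // A.card = k}))
    {l : ℕ} (A : Fin l → Finset (Fin n)) : Prop :=
  ∀ i : Fin l, ∀ e ∈ G,
    ¬ (∀ v ∈ e, v.1 ⊆ (Finset.Iic i).biUnion A ∧ (v.1 ∩ A i).Nonempty)

/-- The fraction of spanning sub-hypergraphs of `KG^r_{n,k}` satisfying `P n`. -/
noncomputable def kneserHyperFraction (k r : ℕ)
    (P : (n : ℕ) → Set (Finset {A : Finset (Fin n) // A.card = k}) → Prop) (n : ℕ) : ℝ :=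
  (Nat.card {E : Set (Finset {A : Finset (Fin n) // A.card = k}) //
      E ⊆ kneserHyperEdges n k r ∧ P n E} : ℝ) /
    2 ^ (kneserHyperEdges n k r).ncard

/-- `KG^r_{n,k}(1/2)` asymptotically almost surely satisfies `P`. -/
def kneserHyperAAS (k r : ℕ)
    (P : (n : ℕ) → Set (Finset {A : Finset (Fin n) // A.card = k}) → Prop) : Prop :=
  Tendsto (kneserHyperFraction k r P) atTop (nhds 1)

section Analysis
open Real

lemma eventually_linlog_le_rpow (c1 c2 e : ℝ) (he : 0 < e) :
    ∀ᶠ y : ℝ in Filter.atTop, c1 * Real.log y + c2 ≤ y ^ e := by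
  have hlit := isLittleO_log_rpow_atTop he
  have hb := hlit.bound (c := 1 / (2 * (|c1| + 1))) (by positivity)
  filter_upwards [hb, Filter.eventually_ge_atTop (1:ℝ),
    (tendsto_rpow_atTop he).eventually_ge_atTop (2 * |c2|)] with y hy h1 h2
  have hlog0 : 0 ≤ Real.log y := Real.log_nonneg h1
  have hy0 : (0:ℝ) ≤ y := by linarith
  have hrp0 : 0 ≤ y ^ e := Real.rpow_nonneg hy0 e
  rw [Real.norm_eq_abs, Real.norm_eq_abs, abs_of_nonneg hlog0, abs_of_nonneg hrp0] at hy
  have hc1 : c1 * Real.log y ≤ |c1| * Real.log y :=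
    mul_le_mul_of_nonneg_right (le_abs_self c1) hlog0
  have hc1' : |c1| * Real.log y ≤ |c1| * (1 / (2 * (|c1| + 1)) * y ^ e) :=
    mul_le_mul_of_nonneg_left hy (abs_nonneg c1)
  have habs : |c1| * (1 / (2 * (|c1| + 1)) * y ^ e) ≤ y ^ e / 2 := by
    rw [div_mul_eq_mul_div, mul_div_assoc']
    rw [div_le_div_iff₀ (by positivity) (by norm_num)]
    nlinarith [abs_nonneg c1, hrp0]
  have hc2 : c2 ≤ y ^ e / 2 := by
    have := le_abs_self c2
    linarith
  linarith

lemma natSqrt_ge (n : ℕ) : Real.sqrt n - 1 ≤ (Nat.sqrt n : ℝ) := by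
  have h0 : (n : ℝ) < ((Nat.sqrt n : ℝ) + 1) ^ 2 := by
    exact_mod_cast Nat.lt_succ_sqrt' n
  have := (Real.sqrt_lt' (by positivity)).mpr h0
  linarith

lemma tendsto_mul_exp_neg_rpow_quarter :
    Filter.Tendsto (fun y : ℝ => y * Real.exp (-(y ^ ((1:ℝ)/4)) / 2))
      Filter.atTop (nhds 0) := by
  have h1 : Filter.Tendsto (fun y : ℝ => y ^ ((1:ℝ)/4) / 2) Filter.atTop Filter.atTop :=
    (tendsto_rpow_atTop (by norm_num)).atTop_div_const (by norm_num)
  have h2 : Filter.Tendsto (fun z : ℝ => (16:ℝ) * (z ^ (4:ℕ) * Real.exp (-z)))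
      Filter.atTop (nhds 0) := by
    have h := tendsto_pow_mul_exp_neg_atTop_nhds_zero 4
    have := h.const_mul (16:ℝ)
    simpa using this
  have h3 := h2.comp h1
  apply h3.congr'
  filter_upwards [Filter.eventually_ge_atTop (0:ℝ)] with y hy
  simp only [Function.comp]
  have hq : ((y ^ ((1:ℝ)/4)) ^ (4:ℕ) : ℝ) = y := by
    rw [← Real.rpow_natCast (y ^ ((1:ℝ)/4)) 4, ← Real.rpow_mul hy]
    norm_num
  rw [div_pow, hq]
  rw [show -(y ^ ((1:ℝ)/4) / 2) = -(y ^ ((1:ℝ)/4)) / 2 by ring]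
  norm_num
  ring

lemma tendsto_glog (C : ℝ) (hC : 0 ≤ C) :
    Filter.Tendsto (fun y : ℝ => (C * Real.logb 2 y + 1) * Real.exp (-(y ^ ((1:ℝ)/4)) / 2))
      Filter.atTop (nhds 0) := by
  set M : ℝ := |C| / Real.log 2 + 1 with hM
  have hlog2 : (0:ℝ) < Real.log 2 := Real.log_pos (by norm_num)
  have hM0 : 0 < M := by positivity
  apply squeeze_zero' (g := fun y : ℝ => M * (y * Real.exp (-(y ^ ((1:ℝ)/4)) / 2)))
  · filter_upwards [Filter.eventually_ge_atTop (2:ℝ)] with y hy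
    have h1 : (0:ℝ) ≤ Real.logb 2 y := Real.logb_nonneg (by norm_num) (by linarith)
    have h2 : (0:ℝ) ≤ C * Real.logb 2 y + 1 := by nlinarith
    exact mul_nonneg h2 (Real.exp_nonneg _)
  · filter_upwards [Filter.eventually_ge_atTop (2:ℝ)] with y hy
    have hy0 : (0:ℝ) < y := by linarith
    have hL0 : (0:ℝ) ≤ Real.log y := Real.log_nonneg (by linarith)
    have hlogy : Real.log y ≤ y := by
      have := Real.log_le_sub_one_of_pos hy0
      linarith
    have hle : C * Real.logb 2 y + 1 ≤ M * y := by
      rw [Real.logb, hM]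
      have hstep1 : C * (Real.log y / Real.log 2) ≤ |C| * (y / Real.log 2) := by
        apply mul_le_mul (le_abs_self C) ?_ (by positivity) (abs_nonneg C)
        exact div_le_div_of_nonneg_right hlogy hlog2.le
      have : |C| / Real.log 2 * y = |C| * (y / Real.log 2) := by ring
      rw [add_mul, this]
      have h1y : 1 * y = y := one_mul y
      nlinarith
    calc (C * Real.logb 2 y + 1) * Real.exp (-(y ^ ((1:ℝ)/4)) / 2)
        ≤ (M * y) * Real.exp (-(y ^ ((1:ℝ)/4)) / 2) :=
          mul_le_mul_of_nonneg_right hle (Real.exp_nonneg _)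
      _ = M * (y * Real.exp (-(y ^ ((1:ℝ)/4)) / 2)) := by ring
  · have := tendsto_mul_exp_neg_rpow_quarter.const_mul M
    simpa using this

end Analysis

section Kneser
open scoped Classical

lemma kneser_frac_le_one (k r : ℕ)
    (P : (n : ℕ) → Set (Finset {A : Finset (Fin n) // A.card = k}) → Prop) (n : ℕ) :
    kneserHyperFraction k r P n ≤ 1 := by
  unfold kneserHyperFraction
  rw [div_le_one (by positivity)]
  set KV := {A : Finset (Fin n) // A.card = k}
  set Ω := {e : Finset KV // e ∈ kneserHyperEdges n k r}
  have hψ : Function.Injective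
      (fun E : {E : Set (Finset KV) // E ⊆ kneserHyperEdges n k r ∧ P n E} =>
        (Finset.univ.filter (fun x : Ω => x.1 ∈ E.1) : Finset Ω)) := by
    intro E E' h
    simp only at h
    apply Subtype.ext
    ext e
    constructor
    · intro he
      have hmem : (⟨e, E.2.1 he⟩ : Ω) ∈ Finset.univ.filter (fun x : Ω => x.1 ∈ E'.1) := by
        rw [← h]
        simp [he]
      simpa using (Finset.mem_filter.mp hmem).2
    · intro he
      have hmem : (⟨e, E'.2.1 he⟩ : Ω) ∈ Finset.univ.filter (fun x : Ω => x.1 ∈ E.1) := by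
        rw [h]
        simp [he]
      simpa using (Finset.mem_filter.mp hmem).2
  have hcard := Nat.card_le_card_of_injective _ hψ
  have hΩ : Nat.card (Finset Ω) = 2 ^ (kneserHyperEdges n k r).ncard := by
    rw [Nat.card_eq_fintype_card, Fintype.card_finset]
    congr 1
    rw [← Nat.card_coe_set_eq, Nat.card_eq_fintype_card]
  rw [hΩ] at hcard
  calc (Nat.card {E : Set (Finset KV) // E ⊆ kneserHyperEdges n k r ∧ P n E} : ℝ)
      ≤ ((2 ^ (kneserHyperEdges n k r).ncard : ℕ) : ℝ) := by exact_mod_cast hcard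
    _ = _ := by push_cast; ring

end Kneser

section Kneser2
open scoped Classical

abbrev KVt (n k : ℕ) := {A : Finset (Fin n) // A.card = k}

abbrev OM (n k r : ℕ) := {e : Finset (KVt n k) // e ∈ kneserHyperEdges n k r}

lemma kneser_lower (k r : ℕ) (hk : 2 ≤ k) (hr : 2 ≤ r) (n l m : ℕ)
    (hm : 1 ≤ m) (hfit : l * m * r ≤ n)
    (Pr : Set (Finset {A : Finset (Fin n) // A.card = k}) → Prop)
    (hQ : ∀ E, (∃ A : Fin l → Finset (Fin n),
        (∀ i, (A i).card = r) ∧ (∀ i j, i ≠ j → Disjoint (A i) (A j)) ∧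
        emptyFamilyIn E A) → Pr E) :
    (1 - (l : ℝ) * (1 - ((2:ℝ) ^ ((r * (r * l) ^ (k - 1)) ^ r))⁻¹) ^ m) *
        2 ^ (kneserHyperEdges n k r).ncard
      ≤ (Nat.card {E : Set (Finset {A : Finset (Fin n) // A.card = k}) //
          E ⊆ kneserHyperEdges n k r ∧ Pr E} : ℝ) := by
  set D : ℕ := (r * (r * l) ^ (k - 1)) ^ r with hD
  -- blocks
  set p : ℕ → ℕ → ℕ := fun i j => (i * m + j) * r with hp
  set B : ℕ → ℕ → Finset (Fin n) :=
    fun i j => Finset.univ.filter (fun v : Fin n => (v : ℕ) ∈ Finset.Ico (p i j) (p i j + r))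
    with hB
  have hmemB : ∀ i j (v : Fin n), v ∈ B i j ↔ (v : ℕ) ∈ Finset.Ico (p i j) (p i j + r) := by
    intro i j v
    simp [hB]
  have hpn : ∀ i j, i < l → j < m → p i j + r ≤ n := by
    intro i j hi hj
    have h1 : i * m + j + 1 ≤ l * m := by
      calc i * m + j + 1 ≤ i * m + m := by omega
        _ = (i + 1) * m := by ring
        _ ≤ l * m := Nat.mul_le_mul_right m (by omega)
    calc p i j + r = (i * m + j + 1) * r := by rw [hp]; ring
      _ ≤ (l * m) * r := Nat.mul_le_mul_right r h1
      _ ≤ n := hfit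
  have hBcard : ∀ i j, i < l → j < m → (B i j).card = r := by
    intro i j hi hj
    have hcard : (B i j).card = (Finset.Ico (p i j) (p i j + r)).card := by
      apply Finset.card_bij (fun (v : Fin n) _ => (v : ℕ))
      · intro v hv
        exact (hmemB i j v).mp hv
      · intro v hv v' hv' h
        exact Fin.val_injective h
      · intro w hw
        have hwn : w < n := by
          have := (Finset.mem_Ico.mp hw).2
          have := hpn i j hi hj
          omega
        exact ⟨⟨w, hwn⟩, (hmemB i j ⟨w, hwn⟩).mpr hw, rfl⟩
    rw [hcard, Nat.card_Ico]
    omega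
  have hBdisj : ∀ i j i' j', j < m → j' < m → (i, j) ≠ (i', j') →
      Disjoint (B i j) (B i' j') := by
    intro i j i' j' hj hj' hne
    have hidx : i * m + j ≠ i' * m + j' := by
      rcases Nat.lt_trichotomy i i' with h | h | h
      · have : i * m + j + 1 ≤ i' * m := by
          calc i * m + j + 1 ≤ i * m + m := by omega
            _ = (i + 1) * m := by ring
            _ ≤ i' * m := Nat.mul_le_mul_right m (by omega)
        omega
      · subst h
        have : j ≠ j' := by
          intro hjj
          exact hne (by rw [hjj])
        omega
      · have : i' * m + j' + 1 ≤ i * m := by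
          calc i' * m + j' + 1 ≤ i' * m + m := by omega
            _ = (i' + 1) * m := by ring
            _ ≤ i * m := Nat.mul_le_mul_right m (by omega)
        omega
    rw [Finset.disjoint_left]
    intro x hx hx'
    rw [hmemB] at hx hx'
    rw [Finset.mem_Ico] at hx hx'
    rw [hp] at hx hx'
    simp only at hx hx'
    rcases Nat.lt_trichotomy (i * m + j) (i' * m + j') with h | h | h
    · have : (i * m + j) * r + r ≤ (i' * m + j') * r := by
        calc (i * m + j) * r + r = (i * m + j + 1) * r := by ring
          _ ≤ (i' * m + j') * r := Nat.mul_le_mul_right r (by omega)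
      omega
    · exact hidx h
    · have : (i' * m + j') * r + r ≤ (i * m + j) * r := by
        calc (i' * m + j') * r + r = (i' * m + j' + 1) * r := by ring
          _ ≤ (i * m + j) * r := Nat.mul_le_mul_right r (by omega)
      omega
  -- the edge families
  set U : ℕ → (ℕ → ℕ) → Finset (Fin n) :=
    fun i σ => (Finset.range i).biUnion (fun t => B t (σ t % m)) with hU
  set EE : ℕ → (ℕ → ℕ) → ℕ → Finset (OM n k r) := fun i σ j => Finset.univ.filter
    (fun e : (OM n k r) => ∀ v ∈ e.1, v.1 ⊆ U i σ ∪ B i j ∧ (v.1 ∩ B i j).Nonempty) with hEE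
  have hcardr : ∀ e : (OM n k r), e.1.card = r := fun e => e.2.1
  have hene : ∀ e : (OM n k r), e.1.Nonempty := by
    intro e
    rw [← Finset.card_pos, hcardr e]
    omega
  have hmodm : ∀ t : ℕ, ∀ σ : ℕ → ℕ, σ t % m < m := fun t σ => Nat.mod_lt _ (by omega)
  -- H1
  have H1 : ∀ i σ σ' j, (∀ t < i, σ t = σ' t) → EE i σ j = EE i σ' j := by
    intro i σ σ' j hag
    have hUeq : U i σ = U i σ' := by
      rw [hU]
      simp only
      apply Finset.biUnion_congr rfl
      intro t ht
      rw [hag t (Finset.mem_range.mp ht)]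
    rw [hEE]
    simp only [hUeq]
  -- H2
  have H2 : ∀ σ i j i' j', i < l → i' < l → j < m → j' < m → (i, j) ≠ (i', j') →
      Disjoint (EE i σ j) (EE i' σ j') := by
    intro σ i j i' j' hi hi' hj hj' hne
    rw [Finset.disjoint_left]
    intro e he he'
    simp only [hEE, Finset.mem_filter, Finset.mem_univ, true_and] at he he'
    obtain ⟨v, hv⟩ := hene e
    obtain ⟨hsub, hne1⟩ := he v hv
    obtain ⟨hsub', hne2⟩ := he' v hv
    rcases Nat.lt_trichotomy i i' with hlt | heq | hgt
    · obtain ⟨x, hx⟩ := hne2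
      have hxB : x ∈ B i' j' := (Finset.mem_inter.mp hx).2
      have hxv : x ∈ v.1 := (Finset.mem_inter.mp hx).1
      rcases Finset.mem_union.mp (hsub hxv) with hUx | hBx
      · obtain ⟨t', ht', hxt⟩ := Finset.mem_biUnion.mp hUx
        have ht'i : t' < i := Finset.mem_range.mp ht'
        exact Finset.disjoint_left.mp
          (hBdisj t' (σ t' % m) i' j' (hmodm t' σ) hj'
            (by simp only [ne_eq, Prod.mk.injEq, not_and]; intro h; omega)) hxt hxB
      · exact Finset.disjoint_left.mp
          (hBdisj i j i' j' hj hj'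
            (by simp only [ne_eq, Prod.mk.injEq, not_and]; intro h; omega)) hBx hxB
    · subst heq
      obtain ⟨x, hx⟩ := hne2
      have hxB : x ∈ B i j' := (Finset.mem_inter.mp hx).2
      have hxv : x ∈ v.1 := (Finset.mem_inter.mp hx).1
      rcases Finset.mem_union.mp (hsub hxv) with hUx | hBx
      · obtain ⟨t', ht', hxt⟩ := Finset.mem_biUnion.mp hUx
        have ht'i : t' < i := Finset.mem_range.mp ht'
        exact Finset.disjoint_left.mp
          (hBdisj t' (σ t' % m) i j' (hmodm t' σ) hj'
            (by simp only [ne_eq, Prod.mk.injEq, not_and]; intro h; omega)) hxt hxB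
      · have hjj' : j ≠ j' := by
          intro h
          exact hne (by rw [h])
        exact Finset.disjoint_left.mp
          (hBdisj i j i j' hj hj'
            (by simp only [ne_eq, Prod.mk.injEq, not_and]; intro _ h; exact hjj' h)) hBx hxB
    · obtain ⟨x, hx⟩ := hne1
      have hxB : x ∈ B i j := (Finset.mem_inter.mp hx).2
      have hxv : x ∈ v.1 := (Finset.mem_inter.mp hx).1
      rcases Finset.mem_union.mp (hsub' hxv) with hUx | hBx
      · obtain ⟨t', ht', hxt⟩ := Finset.mem_biUnion.mp hUx
        have ht'i : t' < i' := Finset.mem_range.mp ht'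
        exact Finset.disjoint_left.mp
          (hBdisj t' (σ t' % m) i j (hmodm t' σ) hj
            (by simp only [ne_eq, Prod.mk.injEq, not_and]; intro h; omega)) hxt hxB
      · exact Finset.disjoint_left.mp
          (hBdisj i' j' i j hj' hj
            (by simp only [ne_eq, Prod.mk.injEq, not_and]; intro h; omega)) hBx hxB
  -- H3
  have H3 : ∀ i σ j, i < l → j < m → (EE i σ j).card ≤ D := by
    intro i σ j hi hj
    set W : Finset (Fin n) := U i σ ∪ B i j with hW
    have hWcard : W.card ≤ r * l := by
      have hU1 : (U i σ).card ≤ i * r := by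
        refine (Finset.card_biUnion_le).trans ?_
        calc ∑ t ∈ Finset.range i, (B t (σ t % m)).card
            ≤ ∑ _t ∈ Finset.range i, r := by
              apply Finset.sum_le_sum
              intro t ht
              rw [hBcard t (σ t % m) (by have := Finset.mem_range.mp ht; omega) (hmodm t σ)]
          _ = i * r := by rw [Finset.sum_const, Finset.card_range, smul_eq_mul]
      calc W.card ≤ (U i σ).card + (B i j).card := Finset.card_union_le _ _
        _ ≤ i * r + r := by
            have := hBcard i j hi hj
            omega
        _ = (i + 1) * r := by ring
        _ ≤ l * r := Nat.mul_le_mul_right r (by omega)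
        _ = r * l := Nat.mul_comm l r
    set Sfin : Finset (KVt n k) := Finset.univ.filter
      (fun v : (KVt n k) => v.1 ⊆ W ∧ (v.1 ∩ B i j).Nonempty) with hSfin
    have h1 : (EE i σ j).card ≤ (Sfin.powersetCard r).card := by
      apply Finset.card_le_card_of_injOn (fun e : (OM n k r) => e.1)
      · intro e he
        simp only [Finset.mem_coe, hEE, Finset.mem_filter, Finset.mem_univ, true_and] at he
        rw [Finset.mem_coe, Finset.mem_powersetCard]
        refine ⟨fun v hv => ?_, hcardr e⟩
        simp only [hSfin, Finset.mem_filter, Finset.mem_univ, true_and]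
        exact he v hv
      · intro a _ b _ h
        exact Subtype.ext h
    have h3 : Sfin.card ≤ r * (r * l) ^ (k - 1) := by
      classical
      have hvne : ∀ v : (KVt n k), v.1.Nonempty := by
        intro v
        rw [← Finset.card_pos, v.2]
        omega
      set pick : (KVt n k) → Fin n := fun v =>
        if h : (v.1 ∩ B i j).Nonempty then (v.1 ∩ B i j).min' h else v.1.min' (hvne v)
        with hpick
      have hpick_mem : ∀ v ∈ Sfin, pick v ∈ v.1 ∩ B i j := by
        intro v hv
        simp only [hSfin, Finset.mem_filter, Finset.mem_univ, true_and] at hv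
        rw [hpick]
        simp only [dif_pos hv.2]
        exact Finset.min'_mem _ hv.2
      have hinj : Sfin.card ≤ ((B i j) ×ˢ (W.powersetCard (k - 1))).card := by
        apply Finset.card_le_card_of_injOn (fun v : (KVt n k) => (pick v, v.1.erase (pick v)))
        · intro v hv
          have hm := hpick_mem v hv
          have hvW : v.1 ⊆ W := by
            simp only [Finset.mem_coe, hSfin, Finset.mem_filter, Finset.mem_univ, true_and] at hv
            exact hv.1
          rw [Finset.mem_coe, Finset.mem_product]
          constructor
          · exact (Finset.mem_inter.mp hm).2
          · rw [Finset.mem_powersetCard]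
            refine ⟨(Finset.erase_subset _ _).trans hvW, ?_⟩
            rw [Finset.card_erase_of_mem (Finset.mem_inter.mp hm).1, v.2]
        · intro a ha b hb h
          simp only [Prod.mk.injEq] at h
          apply Subtype.ext
          have hpa : pick a ∈ a.1 := (Finset.mem_inter.mp (hpick_mem a ha)).1
          have hpb : pick b ∈ b.1 := (Finset.mem_inter.mp (hpick_mem b hb)).1
          calc a.1 = insert (pick a) (a.1.erase (pick a)) :=
                (Finset.insert_erase hpa).symm
            _ = insert (pick b) (b.1.erase (pick b)) := by rw [h.2, h.1]
            _ = b.1 := Finset.insert_erase hpb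
      calc Sfin.card ≤ ((B i j) ×ˢ (W.powersetCard (k - 1))).card := hinj
        _ = r * (W.card.choose (k - 1)) := by
            rw [Finset.card_product, hBcard i j hi hj, Finset.card_powersetCard]
        _ ≤ r * (r * l) ^ (k - 1) := by
            apply Nat.mul_le_mul_left
            calc W.card.choose (k - 1) ≤ W.card ^ (k - 1) := Nat.choose_le_pow _ _
              _ ≤ (r * l) ^ (k - 1) := Nat.pow_le_pow_left hWcard _
    calc (EE i σ j).card ≤ (Sfin.powersetCard r).card := h1
      _ = Sfin.card.choose r := by rw [Finset.card_powersetCard]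
      _ ≤ Sfin.card ^ r := Nat.choose_le_pow _ _
      _ ≤ (r * (r * l) ^ (k - 1)) ^ r := Nat.pow_le_pow_left h3 r
      _ = D := by rw [hD]
  -- H4 (F = ∅)
  have H4 : ∀ i σ j, i < l → j < m → Disjoint (EE i σ j) (∅ : Finset (OM n k r)) :=
    fun i σ j _ _ => Finset.disjoint_empty_right _
  -- apply the abstract bound with F = t = ∅
  have habs := abstract_bound l m D EE H1 H2 H3 (∅ : Finset (OM n k r)) (∅ : Finset (OM n k r))
    (Finset.Subset.refl _) H4
  have hfiltereq : (Finset.univ.filter fun G : Finset (OM n k r) => G ∩ ∅ = ∅ ∧ ¬ goodP l m EE G)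
      = Finset.univ.filter (fun G : Finset (OM n k r) => ¬ goodP l m EE G) := by
    apply Finset.filter_congr
    intro G _
    simp
  rw [hfiltereq] at habs
  simp only [Finset.card_empty, pow_zero, div_one] at habs
  -- the map from subgraphs to edge sets
  set φ : Finset (OM n k r) → Set (Finset (KVt n k)) :=
    fun G => {e | ∃ h : e ∈ kneserHyperEdges n k r, (⟨e, h⟩ : (OM n k r)) ∈ G} with hφ
  have hφmem : ∀ (G : Finset (OM n k r)) (x : (OM n k r)), x.1 ∈ φ G ↔ x ∈ G := by
    intro G x
    simp only [hφ, Set.mem_setOf_eq]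
    constructor
    · rintro ⟨h', hx⟩
      have he : (⟨x.1, h'⟩ : (OM n k r)) = x := Subtype.ext rfl
      rwa [he] at hx
    · intro hx
      refine ⟨x.2, ?_⟩
      have he : (⟨x.1, x.2⟩ : (OM n k r)) = x := Subtype.ext rfl
      rwa [he]
  have hφinj : Function.Injective φ := by
    intro G G' h
    ext x
    rw [← hφmem G x, ← hφmem G' x, h]
  have hφsub : ∀ G, φ G ⊆ kneserHyperEdges n k r := by
    rintro G e ⟨h, _⟩
    exact h
  -- good subgraphs give empty families
  have hgood_family : ∀ G : Finset (OM n k r), goodP l m EE G →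
      ∃ A : Fin l → Finset (Fin n),
        (∀ i, (A i).card = r) ∧ (∀ i j, i ≠ j → Disjoint (A i) (A j)) ∧
        emptyFamilyIn (φ G) A := by
    rintro G ⟨σ, hσm, hσd⟩
    refine ⟨fun i => B i.1 (σ i.1), ?_, ?_, ?_⟩
    · intro i
      exact hBcard i.1 (σ i.1) i.2 (hσm i.1 i.2)
    · intro i i' hii'
      apply hBdisj _ _ _ _ (hσm i.1 i.2) (hσm i'.1 i'.2)
      intro hpe
      rw [Prod.mk.injEq] at hpe
      exact hii' (Fin.ext hpe.1)
    · intro i e he hcond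
      obtain ⟨hE, hG⟩ := he
      have hmem : (⟨e, hE⟩ : (OM n k r)) ∈ EE i.1 σ (σ i.1) := by
        simp only [hEE, Finset.mem_filter, Finset.mem_univ, true_and]
        intro v hv
        obtain ⟨h1, h2⟩ := hcond v hv
        refine ⟨?_, h2⟩
        intro x hx
        obtain ⟨t, ht, hxt⟩ := Finset.mem_biUnion.mp (h1 hx)
        have htle : t ≤ i := Finset.mem_Iic.mp ht
        rcases eq_or_lt_of_le htle with heq | hlt
        · exact Finset.mem_union_right _ (heq ▸ hxt)
        · apply Finset.mem_union_left
          apply Finset.mem_biUnion.mpr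
          refine ⟨t.1, Finset.mem_range.mpr ?_, ?_⟩
          · exact (Fin.lt_def.mp hlt)
          · rw [Nat.mod_eq_of_lt (hσm t.1 t.2)]
            exact hxt
      exact Finset.disjoint_left.mp (hσd i.1 i.2) hmem hG
  -- injection into the edge-set subtype
  have hinj2 : Function.Injective (fun G : {G : Finset (OM n k r) // goodP l m EE G} =>
      (⟨φ G.1, hφsub G.1, hQ _ (hgood_family G.1 G.2)⟩ :
        {E : Set (Finset (KVt n k)) // E ⊆ kneserHyperEdges n k r ∧ Pr E})) := by
    intro a b h
    apply Subtype.ext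
    apply hφinj
    exact congrArg Subtype.val h
  have hcount := Nat.card_le_card_of_injective _ hinj2
  have hgc : Nat.card {G : Finset (OM n k r) // goodP l m EE G}
      = (Finset.univ.filter (fun G : Finset (OM n k r) => goodP l m EE G)).card := by
    rw [Nat.card_eq_fintype_card, Fintype.card_subtype]
  have hsplitc := Finset.card_filter_add_card_filter_not
    (s := (Finset.univ : Finset (Finset (OM n k r)))) (p := fun G : Finset (OM n k r) => goodP l m EE G)
  have htot : (Finset.univ : Finset (Finset (OM n k r))).card = 2 ^ Fintype.card (OM n k r) := by
    rw [Finset.card_univ, Fintype.card_finset]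
  have hNL : (kneserHyperEdges n k r).ncard = Fintype.card (OM n k r) := by
    rw [← Nat.card_coe_set_eq, Nat.card_eq_fintype_card]
  rw [hNL]
  have hle1 : ((Finset.univ.filter (fun G : Finset (OM n k r) => goodP l m EE G)).card : ℝ)
      ≤ (Nat.card {E : Set (Finset (KVt n k)) // E ⊆ kneserHyperEdges n k r ∧ Pr E} : ℝ) := by
    rw [← hgc]
    exact_mod_cast hcount
  have hle2 : (2:ℝ) ^ Fintype.card (OM n k r)
        - l * (1 - ((2:ℝ) ^ D)⁻¹) ^ m * 2 ^ Fintype.card (OM n k r)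
      ≤ ((Finset.univ.filter (fun G : Finset (OM n k r) => goodP l m EE G)).card : ℝ) := by
    have heq : ((Finset.univ.filter (fun G : Finset (OM n k r) => goodP l m EE G)).card : ℝ)
        = 2 ^ Fintype.card (OM n k r)
          - ((Finset.univ.filter (fun G : Finset (OM n k r) => ¬ goodP l m EE G)).card : ℝ) := by
      rw [eq_sub_iff_add_eq]
      rw [htot] at hsplitc
      exact_mod_cast hsplitc
    rw [heq]
    linarith [habs]
  calc (1 - (l : ℝ) * (1 - ((2:ℝ) ^ ((r * (r * l) ^ (k - 1)) ^ r))⁻¹) ^ m)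
          * 2 ^ Fintype.card (OM n k r)
      = (2:ℝ) ^ Fintype.card (OM n k r)
          - l * (1 - ((2:ℝ) ^ D)⁻¹) ^ m * 2 ^ Fintype.card (OM n k r) := by rw [hD]; ring
    _ ≤ ((Finset.univ.filter (fun G : Finset (OM n k r) => goodP l m EE G)).card : ℝ) := hle2
    _ ≤ _ := hle1

end Kneser2

/-- For fixed `r, k ≥ 2` there is `C > 0` such that a.a.s. `KG^r_{n,k}(1/2)` contains an
empty family of `l = ⌈C·(log₂ n)^{1/(r(k−1))}⌉` pairwise disjoint `r`-element subsets
of `[n]`. -/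
theorem empty_family_exists_aas (k r : ℕ) (hk : 2 ≤ k) (hr : 2 ≤ r) :
    ∃ C : ℝ, 0 < C ∧
      kneserHyperAAS k r (fun n E =>
        ∃ A : Fin ⌈C * Real.logb 2 n ^ ((1 : ℝ) / ((r : ℝ) * ((k : ℝ) - 1)))⌉₊ →
            Finset (Fin n),
          (∀ i, (A i).card = r) ∧ (∀ i j, i ≠ j → Disjoint (A i) (A j)) ∧
          emptyFamilyIn E A) := by
  have hrR : (0:ℝ) < (r:ℝ) := by positivity
  set a : ℕ := r * (k - 1) with ha
  have ha2 : 2 ≤ a := by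
    have h1 : 1 ≤ k - 1 := by omega
    calc 2 ≤ r := hr
      _ = r * 1 := (mul_one r).symm
      _ ≤ r * (k - 1) := Nat.mul_le_mul_left r h1
  have haR : (0:ℝ) < (a:ℝ) := by exact_mod_cast Nat.lt_of_lt_of_le Nat.zero_lt_two ha2
  have hexp : (r:ℝ) * ((k:ℝ) - 1) = (a:ℝ) := by
    rw [ha]
    push_cast [Nat.cast_sub (by omega : 1 ≤ k)]
    ring
  set C : ℝ := (1/(2*(r:ℝ))) * ((1:ℝ)/(4 * (r:ℝ)^r)) ^ ((1:ℝ)/(a:ℝ)) with hCdef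
  have hC : 0 < C := by
    apply mul_pos (by positivity)
    exact Real.rpow_pos_of_pos (by positivity) _
  refine ⟨C, hC, ?_⟩
  unfold kneserHyperAAS
  set P : (n : ℕ) → Set (Finset {A : Finset (Fin n) // A.card = k}) → Prop := fun n E =>
    ∃ A : Fin ⌈C * Real.logb 2 n ^ ((1 : ℝ) / ((r : ℝ) * ((k : ℝ) - 1)))⌉₊ →
        Finset (Fin n),
      (∀ i, (A i).card = r) ∧ (∀ i j, i ≠ j → Disjoint (A i) (A j)) ∧
      emptyFamilyIn E A with hP
  set l : ℕ → ℕ :=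
    fun n => ⌈C * Real.logb 2 n ^ ((1 : ℝ) / ((r : ℝ) * ((k : ℝ) - 1)))⌉₊ with hldef
  set m : ℕ → ℕ := fun n => Nat.sqrt n with hmdef
  set D : ℕ → ℕ := fun n => (r * (r * l n) ^ (k - 1)) ^ r with hDdef
  set ε : ℕ → ℝ := fun n => (l n : ℝ) * (1 - ((2:ℝ) ^ (D n))⁻¹) ^ (m n) with hεdef
  -- the logb tends to infinity along ℕ
  have hlogb : Filter.Tendsto (fun n : ℕ => Real.logb 2 n) Filter.atTop Filter.atTop :=
    (Real.tendsto_logb_atTop (by norm_num)).comp tendsto_natCast_atTop_atTop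
  -- l n is at most C * logb + 1 when logb ≥ 1
  have hlle : ∀ n : ℕ, 1 ≤ Real.logb 2 n → (l n : ℝ) ≤ C * Real.logb 2 n + 1 := by
    intro n hlog1
    have hx0 : (0:ℝ) ≤ Real.logb 2 n := by linarith
    have harg0 : (0:ℝ) ≤ C * Real.logb 2 n ^ ((1 : ℝ) / ((r : ℝ) * ((k : ℝ) - 1))) := by
      apply mul_nonneg hC.le
      exact Real.rpow_nonneg hx0 _
    have hceil := Nat.ceil_lt_add_one harg0
    have hxe : Real.logb 2 n ^ ((1 : ℝ) / ((r : ℝ) * ((k : ℝ) - 1))) ≤ Real.logb 2 n := by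
      calc Real.logb 2 n ^ ((1 : ℝ) / ((r : ℝ) * ((k : ℝ) - 1)))
          ≤ Real.logb 2 n ^ (1:ℝ) := by
            apply Real.rpow_le_rpow_of_exponent_le hlog1
            rw [hexp]
            rw [div_le_one haR]
            exact_mod_cast Nat.one_le_iff_ne_zero.mpr (by omega)
        _ = Real.logb 2 n := Real.rpow_one _
    have : (l n : ℝ) < C * Real.logb 2 n ^ ((1 : ℝ) / ((r : ℝ) * ((k : ℝ) - 1))) + 1 := by
      rw [hldef]
      exact_mod_cast hceil
    nlinarith [hC.le]
  -- D n ≤ logb / 4 eventually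
  have hD4 : ∀ᶠ n : ℕ in Filter.atTop, (D n : ℝ) ≤ Real.logb 2 n / 4 := by
    filter_upwards [hlogb.eventually_ge_atTop 1,
      hlogb.eventually_ge_atTop ((1/C) ^ (a:ℝ))] with n hlog1 hlogC
    set x : ℝ := Real.logb 2 n with hx
    have hx0 : (0:ℝ) ≤ x := by linarith
    have hxa : (x ^ ((1:ℝ)/(a:ℝ))) ^ (a:ℕ) = x := by
      rw [← Real.rpow_natCast (x ^ ((1:ℝ)/(a:ℝ))) a, ← Real.rpow_mul hx0]
      rw [one_div_mul_cancel (ne_of_gt haR), Real.rpow_one]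
    have hxquarter : 1/C ≤ x ^ ((1:ℝ)/(a:ℝ)) := by
      have h1C : (0:ℝ) < 1/C := by positivity
      calc 1/C = ((1/C) ^ (a:ℝ)) ^ ((1:ℝ)/(a:ℝ)) := by
            rw [← Real.rpow_mul h1C.le, mul_one_div_cancel (ne_of_gt haR), Real.rpow_one]
        _ ≤ x ^ ((1:ℝ)/(a:ℝ)) := by
            apply Real.rpow_le_rpow (by positivity) hlogC (by positivity)
    have h1 : (1:ℝ) ≤ C * x ^ ((1:ℝ)/(a:ℝ)) := by
      have h2 := mul_le_mul_of_nonneg_left hxquarter hC.le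
      rwa [mul_one_div, div_self (ne_of_gt hC)] at h2
    have hceil : (l n : ℝ) < C * x ^ ((1:ℝ)/(a:ℝ)) + 1 := by
      have harg0 : (0:ℝ) ≤ C * x ^ ((1 : ℝ) / ((r : ℝ) * ((k : ℝ) - 1))) := by
        apply mul_nonneg hC.le
        exact Real.rpow_nonneg hx0 _
      have h3 : (l n : ℝ) < C * x ^ ((1 : ℝ) / ((r : ℝ) * ((k : ℝ) - 1))) + 1 := by
        rw [hldef]
        exact_mod_cast Nat.ceil_lt_add_one harg0
      rwa [hexp] at h3
    have hl2C : (l n : ℝ) ≤ 2 * C * x ^ ((1:ℝ)/(a:ℝ)) := by nlinarith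
    have hln0 : (0:ℝ) ≤ (l n : ℝ) := Nat.cast_nonneg _
    have hcast : (D n : ℝ) = ((r:ℝ) * ((r:ℝ) * (l n:ℝ)) ^ (k-1)) ^ r := by
      rw [hDdef]
      push_cast
      ring
    have hkr : (k-1) * r = a := by rw [ha, Nat.mul_comm]
    have h2rCa : (2*(r:ℝ)*C) ^ (a:ℕ) = 1/(4*(r:ℝ)^r) := by
      have h2rC : (2*(r:ℝ)*C) = ((1:ℝ)/(4 * (r:ℝ)^r)) ^ ((1:ℝ)/(a:ℝ)) := by
        rw [hCdef]
        field_simp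
      rw [h2rC, ← Real.rpow_natCast _ a, ← Real.rpow_mul (by positivity),
        one_div_mul_cancel (ne_of_gt haR), Real.rpow_one]
    have hrpow_pos : (0:ℝ) < (r:ℝ)^r := by positivity
    calc (D n : ℝ) = (r:ℝ)^r * ((r:ℝ) * (l n:ℝ)) ^ ((k-1)*r) := by
          rw [hcast, mul_pow, ← pow_mul]
      _ ≤ (r:ℝ)^r * ((2*(r:ℝ)*C) * x ^ ((1:ℝ)/(a:ℝ))) ^ ((k-1)*r) := by
          apply mul_le_mul_of_nonneg_left _ (by positivity)
          apply pow_le_pow_left₀ (by positivity)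
          nlinarith
      _ = (r:ℝ)^r * ((2*(r:ℝ)*C)^(a:ℕ) * (x ^ ((1:ℝ)/(a:ℝ)))^(a:ℕ)) := by
          rw [hkr, mul_pow]
      _ = (r:ℝ)^r * (1/(4*(r:ℝ)^r) * x) := by rw [h2rCa, hxa]
      _ = x / 4 := by field_simp
  -- probability factor bound
  have hQle1 : ∀ n : ℕ, ((2:ℝ) ^ (D n))⁻¹ ≤ 1 := by
    intro n
    rw [inv_le_one_iff₀]
    right
    exact one_le_pow₀ (by norm_num)
  have hQmain : ∀ᶠ n : ℕ in Filter.atTop,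
      (1 - ((2:ℝ) ^ (D n))⁻¹) ^ (m n) ≤ Real.exp (-((n:ℝ) ^ ((1:ℝ)/4)) / 2) := by
    filter_upwards [hD4, Filter.eventually_ge_atTop 4] with n hD hn4
    have hn0 : (0:ℝ) < (n:ℝ) := by
      have : 0 < n := by omega
      exact_mod_cast this
    have h2D : (2:ℝ) ^ (D n) ≤ (n:ℝ) ^ ((1:ℝ)/4) := by
      have e1 : (2:ℝ) ^ (D n) = (2:ℝ) ^ ((D n : ℝ)) := (Real.rpow_natCast 2 (D n)).symm
      have e2 : ((2:ℝ) ^ (Real.logb 2 n)) = (n:ℝ) :=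
        Real.rpow_logb (by norm_num) (by norm_num) hn0
      rw [e1]
      calc (2:ℝ) ^ ((D n : ℝ)) ≤ (2:ℝ) ^ (Real.logb 2 n * (1/4)) := by
            apply Real.rpow_le_rpow_of_exponent_le (by norm_num)
            linarith
        _ = ((2:ℝ) ^ (Real.logb 2 n)) ^ ((1:ℝ)/4) := Real.rpow_mul (by norm_num) _ _
        _ = (n:ℝ) ^ ((1:ℝ)/4) := by rw [e2]
    have hQn : ((n:ℝ) ^ ((1:ℝ)/4))⁻¹ ≤ ((2:ℝ) ^ (D n))⁻¹ := inv_anti₀ (by positivity) h2D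
    have hsqrt2 : (2:ℝ) ≤ Real.sqrt n := by
      rw [show (2:ℝ) = Real.sqrt 4 by
        rw [show (4:ℝ) = 2^2 by norm_num, Real.sqrt_sq (by norm_num)]]
      exact Real.sqrt_le_sqrt (by exact_mod_cast hn4)
    have hm_ge : Real.sqrt n / 2 ≤ (m n : ℝ) := by
      have := natSqrt_ge n
      rw [hmdef]
      simp only
      linarith
    have hmQ : ((n:ℝ) ^ ((1:ℝ)/4)) / 2 ≤ (m n : ℝ) * ((2:ℝ) ^ (D n))⁻¹ := by
      have hs : Real.sqrt (n:ℝ) = (n:ℝ) ^ ((1:ℝ)/2) := by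
        rw [Real.sqrt_eq_rpow]
      have hprod : ((n:ℝ) ^ ((1:ℝ)/2) / 2) * ((n:ℝ) ^ ((1:ℝ)/4))⁻¹
          = (n:ℝ) ^ ((1:ℝ)/4) / 2 := by
        rw [← Real.rpow_neg hn0.le, div_mul_eq_mul_div, ← Real.rpow_add hn0]
        norm_num
      calc ((n:ℝ) ^ ((1:ℝ)/4)) / 2
          = ((n:ℝ) ^ ((1:ℝ)/2) / 2) * ((n:ℝ) ^ ((1:ℝ)/4))⁻¹ := hprod.symm
        _ ≤ (m n : ℝ) * ((2:ℝ) ^ (D n))⁻¹ := by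
            apply mul_le_mul ?_ hQn (by positivity) (Nat.cast_nonneg _)
            rw [← hs]
            exact hm_ge
    calc (1 - ((2:ℝ) ^ (D n))⁻¹) ^ (m n)
        ≤ (Real.exp (-((2:ℝ) ^ (D n))⁻¹)) ^ (m n) := by
          apply pow_le_pow_left₀ (by linarith [hQle1 n])
          have := Real.add_one_le_exp (-((2:ℝ) ^ (D n))⁻¹)
          linarith
      _ = Real.exp ((m n : ℝ) * (-((2:ℝ) ^ (D n))⁻¹)) := (Real.exp_nat_mul _ _).symm
      _ ≤ Real.exp (-((n:ℝ) ^ ((1:ℝ)/4)) / 2) := by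
          apply Real.exp_le_exp.mpr
          rw [show (m n:ℝ) * (-((2:ℝ)^(D n))⁻¹) = -((m n:ℝ) * ((2:ℝ)^(D n))⁻¹) from by ring,
            show -((n:ℝ)^((1:ℝ)/4))/2 = -(((n:ℝ)^((1:ℝ)/4))/2) from by ring]
          exact neg_le_neg hmQ
  -- fit and m ≥ 1 eventually
  have hfit : ∀ᶠ n : ℕ in Filter.atTop, l n * m n * r ≤ n ∧ 1 ≤ m n := by
    have hev := eventually_linlog_le_rpow (C*r/Real.log 2) ((r:ℝ)+2) (1/2) (by norm_num)
    filter_upwards [tendsto_natCast_atTop_atTop.eventually hev,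
      hlogb.eventually_ge_atTop 1, Filter.eventually_ge_atTop 1] with n hlin hlog1 hn1
    have hlog2 : (0:ℝ) < Real.log 2 := Real.log_pos (by norm_num)
    constructor
    · have hlr : (l n : ℝ) * r ≤ (Nat.sqrt n : ℝ) := by
        have h1 : (l n : ℝ) ≤ C * Real.logb 2 n + 1 := hlle n hlog1
        have heqq : C * Real.logb 2 n * r = (C*r/Real.log 2) * Real.log n := by
          rw [Real.logb]
          field_simp
        have h2 : (C * Real.logb 2 n + 1) * (r:ℝ) + 1 ≤ (n:ℝ) ^ ((1:ℝ)/2) := by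
          calc (C * Real.logb 2 n + 1) * (r:ℝ) + 1
              = C * Real.logb 2 n * r + ((r:ℝ) + 1) := by ring
            _ ≤ (C*r/Real.log 2) * Real.log n + ((r:ℝ) + 2) := by
                rw [heqq]
                linarith
            _ ≤ (n:ℝ) ^ ((1:ℝ)/2) := hlin
        have h3 : (n:ℝ) ^ ((1:ℝ)/2) = Real.sqrt (n:ℝ) := (Real.sqrt_eq_rpow _).symm
        have h4 := natSqrt_ge n
        have h5 : (l n : ℝ) * r ≤ (C * Real.logb 2 n + 1) * r :=
          mul_le_mul_of_nonneg_right h1 (by positivity)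
        rw [h3] at h2
        linarith
      have hlrN : l n * r ≤ Nat.sqrt n := by exact_mod_cast hlr
      calc l n * m n * r = (l n * r) * m n := by ring
        _ ≤ Nat.sqrt n * m n := Nat.mul_le_mul_right (m n) hlrN
        _ = Nat.sqrt n * Nat.sqrt n := by rw [hmdef]
        _ ≤ n := by have := Nat.sqrt_le' n; nlinarith [this]
    · rw [hmdef]
      simp only
      have : 0 < Nat.sqrt n := Nat.sqrt_pos.mpr (by omega)
      omega
  -- lower bound on the fraction, eventually
  have hlb : ∀ᶠ n in Filter.atTop, 1 - ε n ≤ kneserHyperFraction k r P n := by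
    filter_upwards [hfit] with n hn
    obtain ⟨hf, hm1⟩ := hn
    have h := kneser_lower k r hk hr n (l n) (m n) hm1 hf (P n) (fun E hE => hE)
    unfold kneserHyperFraction
    rw [le_div_iff₀ (by positivity)]
    exact h
  -- epsilon tends to zero
  have hε0 : Filter.Tendsto ε Filter.atTop (nhds 0) := by
    apply squeeze_zero' (g := fun n : ℕ =>
      (C * Real.logb 2 n + 1) * Real.exp (-((n:ℝ) ^ ((1:ℝ)/4)) / 2))
    · apply Filter.Eventually.of_forall
      intro n
      rw [hεdef]
      apply mul_nonneg (Nat.cast_nonneg _)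
      apply pow_nonneg
      linarith [hQle1 n]
    · filter_upwards [hQmain, hlogb.eventually_ge_atTop 1] with n hQm hlog1
      have h1 := hlle n hlog1
      rw [hεdef]
      simp only
      apply mul_le_mul h1 hQm
      · apply pow_nonneg
        linarith [hQle1 n]
      · nlinarith [hC.le]
    · exact (tendsto_glog C hC.le).comp tendsto_natCast_atTop_atTop
  -- conclude by squeezing
  have h1 : Filter.Tendsto (fun n : ℕ => 1 - ε n) Filter.atTop (nhds 1) := by
    have h2 := (tendsto_const_nhds (x := (1:ℝ)) (f := Filter.atTop (α := ℕ))).sub hε0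
    simpa using h2
  exact tendsto_of_tendsto_of_tendsto_of_le_of_le' h1 tendsto_const_nhds hlb
    (Filter.Eventually.of_forall (kneser_frac_le_one k r P))
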